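/- arXiv:1710.02749 — 3 statements merged into one kernel-verified Lean document; each statement's English description precedes it below -/
import Mathlib

section
/- Let U ⊂ ℝ^n be open, Φ₀ : cl(U) → ℝ^n continuously differentiable, p₀ ∈ U, and suppose DΦ₀(p₀) is invertible. Then there exist a neighborhood W of Φ₀(p₀), a neighborhood 𝒰 of Φ₀ in C¹(cl(U)), and a constant C > 0 such that for every Φ ∈ 𝒰, the local inverses exist on cl(W) and ‖Φ⁻¹ - Φ₀⁻¹‖_{C⁰(cl(W))} ≤ C ‖Φ - Φ₀‖_{C¹(cl(U))}. -/
set_option maxHeartbeats 1000000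


open Set

/-- Stability of local inverses under `C¹` perturbation (implicit function theorem
consequence).  If `Φ₀` is `C¹` on `cl U` with invertible derivative at `p₀ ∈ U`, then
there are a neighbourhood `W` of `Φ₀ p₀`, a constant `C > 0` and a `C¹`-neighbourhood
of `Φ₀` (radius `δ`) such that every `Φ` in that neighbourhood has a local inverse `Ψ`
on `cl W` with values in `U`, and any two such local inverses satisfy
`‖Ψ - Ψ₀‖_{C⁰(cl W)} ≤ C ‖Φ - Φ₀‖_{C¹(cl U)}`. -/
theorem local_inverse_stability {n : ℕ}
    (U : Set (EuclideanSpace ℝ (Fin n)))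
    (hU : IsOpen U)
    (Φ₀ : EuclideanSpace ℝ (Fin n) → EuclideanSpace ℝ (Fin n))
    (hΦ₀ : ContDiffOn ℝ 1 Φ₀ (closure U))
    (p₀ : EuclideanSpace ℝ (Fin n)) (hp₀ : p₀ ∈ U)
    (hD : ∃ D : (EuclideanSpace ℝ (Fin n)) ≃L[ℝ] (EuclideanSpace ℝ (Fin n)),
      (D : EuclideanSpace ℝ (Fin n) →L[ℝ] EuclideanSpace ℝ (Fin n)) = fderiv ℝ Φ₀ p₀) :
    ∃ W ∈ nhds (Φ₀ p₀), ∃ V ∈ nhds p₀, V ⊆ U ∧ ∃ C > (0:ℝ), ∃ δ > (0:ℝ),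
      -- `Φ₀` itself has a local inverse `Ψ₀` on `cl W` with values in `U`
      (∃ Ψ₀ : EuclideanSpace ℝ (Fin n) → EuclideanSpace ℝ (Fin n),
        ContinuousOn Ψ₀ (closure W) ∧ (∀ q ∈ closure W, Ψ₀ q ∈ V ∧ Φ₀ (Ψ₀ q) = q)) ∧
      -- every `C¹`-close `Φ` has a local inverse, and the inverses are stably close
      (∀ Φ : EuclideanSpace ℝ (Fin n) → EuclideanSpace ℝ (Fin n),
        ContDiffOn ℝ 1 Φ (closure U) →
        ∀ ε : ℝ, 0 ≤ ε → ε ≤ δ →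
        (∀ x ∈ closure U, ‖Φ x - Φ₀ x‖ + ‖fderiv ℝ Φ x - fderiv ℝ Φ₀ x‖ ≤ ε) →
        (∃ Ψ : EuclideanSpace ℝ (Fin n) → EuclideanSpace ℝ (Fin n),
          ContinuousOn Ψ (closure W) ∧ (∀ q ∈ closure W, Ψ q ∈ V ∧ Φ (Ψ q) = q)) ∧
        (∀ Ψ Ψ₀ : EuclideanSpace ℝ (Fin n) → EuclideanSpace ℝ (Fin n),
          (∀ q ∈ closure W, Ψ q ∈ V ∧ Φ (Ψ q) = q) →
          (∀ q ∈ closure W, Ψ₀ q ∈ V ∧ Φ₀ (Ψ₀ q) = q) →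
          ∀ q ∈ closure W, ‖Ψ q - Ψ₀ q‖ ≤ C * ε)) := by
  classical
  obtain ⟨A, hA⟩ := hD
  rcases subsingleton_or_nontrivial (EuclideanSpace ℝ (Fin n)) with hss | hnt
  · -- trivial case : the space is a singleton
    refine ⟨univ, Filter.univ_mem, U, hU.mem_nhds hp₀, subset_rfl, 1, one_pos, 1, one_pos,
      ⟨fun _ => p₀, continuousOn_const, fun q _ => ⟨hp₀, Subsingleton.elim _ _⟩⟩, ?_⟩
    intro Φ _ ε hε0 _ _
    refine ⟨⟨fun _ => p₀, continuousOn_const, fun q _ => ⟨hp₀, Subsingleton.elim _ _⟩⟩, ?_⟩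
    intro Ψ Ψ₀ _ _ q _
    have : Ψ q = Ψ₀ q := Subsingleton.elim _ _
    simp [this, hε0]
  -- main case
  have hAsymm_pos : 0 < ‖(A.symm : EuclideanSpace ℝ (Fin n) →L[ℝ] EuclideanSpace ℝ (Fin n))‖ := by
    rcases exists_ne (0 : EuclideanSpace ℝ (Fin n)) with ⟨x, hx⟩
    refine norm_pos_iff.mpr fun h => hx ?_
    have h0 : A.symm x = 0 := by
      have := congrFun (congrArg (fun (T : EuclideanSpace ℝ (Fin n) →L[ℝ] EuclideanSpace ℝ (Fin n)) => (T : EuclideanSpace ℝ (Fin n) → EuclideanSpace ℝ (Fin n))) h) x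
      simpa using this
    calc x = A (A.symm x) := (A.apply_symm_apply x).symm
      _ = 0 := by rw [h0]; simp
  obtain ⟨N, hN1, hAN⟩ : ∃ N : ℝ, 1 ≤ N ∧
      ‖(A.symm : EuclideanSpace ℝ (Fin n) →L[ℝ] EuclideanSpace ℝ (Fin n))‖ < N :=
    ⟨‖(A.symm : EuclideanSpace ℝ (Fin n) →L[ℝ] EuclideanSpace ℝ (Fin n))‖ + 1,
      by linarith [norm_nonneg (A.symm : EuclideanSpace ℝ (Fin n) →L[ℝ] EuclideanSpace ℝ (Fin n))],
      by linarith⟩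
  have hN0 : 0 < N := lt_of_lt_of_le one_pos hN1
  have hAinv : ∀ v : EuclideanSpace ℝ (Fin n), ‖v‖ ≤ N * ‖A v‖ := by
    intro v
    have h1 : ‖(A.symm : EuclideanSpace ℝ (Fin n) →L[ℝ] EuclideanSpace ℝ (Fin n)) (A v)‖ ≤ ‖(A.symm : EuclideanSpace ℝ (Fin n) →L[ℝ] EuclideanSpace ℝ (Fin n))‖ * ‖A v‖ :=
      (A.symm : EuclideanSpace ℝ (Fin n) →L[ℝ] EuclideanSpace ℝ (Fin n)).le_opNorm _
    have h2 : (A.symm : EuclideanSpace ℝ (Fin n) →L[ℝ] EuclideanSpace ℝ (Fin n)) (A v) = v := A.symm_apply_apply v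
    rw [h2] at h1
    nlinarith [norm_nonneg (A v)]
  -- differentiability off the `C¹` assumption
  have hdiff : ∀ g : EuclideanSpace ℝ (Fin n) → EuclideanSpace ℝ (Fin n), ContDiffOn ℝ 1 g (closure U) →
      ∀ x ∈ U, HasFDerivAt g (fderiv ℝ g x) x := by
    intro g hg x hx
    have hcd : ContDiffAt ℝ 1 g x :=
      hg.contDiffAt (Filter.mem_of_superset (hU.mem_nhds hx) subset_closure)
    exact (hcd.differentiableAt one_ne_zero).hasFDerivAt
  -- the derivative of `Φ₀` is continuous on `U`, find a good closed ball
  have hcont : ContinuousOn (fderiv ℝ Φ₀) U :=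
    (hΦ₀.mono subset_closure).continuousOn_fderiv_of_isOpen hU le_rfl
  have hca : ContinuousAt (fderiv ℝ Φ₀) p₀ := hcont.continuousAt (hU.mem_nhds hp₀)
  have hmem : {x : EuclideanSpace ℝ (Fin n) | ‖fderiv ℝ Φ₀ x - A‖ ≤ 1 / (4 * N)} ∈ nhds p₀ := by
    have h4N : (0:ℝ) < 1/(4*N) := by positivity
    have := hca (Metric.closedBall_mem_nhds (fderiv ℝ Φ₀ p₀) h4N)
    refine Filter.mem_of_superset this ?_
    intro x hx
    rw [Set.mem_preimage, Metric.mem_closedBall, dist_eq_norm, ← hA] at hx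
    exact hx
  obtain ⟨r, hr0, hrsub⟩ := Metric.nhds_basis_closedBall.mem_iff.1
    (Filter.inter_mem (hU.mem_nhds hp₀) hmem)
  set s : Set (EuclideanSpace ℝ (Fin n)) := Metric.closedBall p₀ r with hsdef
  have hsU : s ⊆ U := fun x hx => (hrsub hx).1
  have hsder : ∀ x ∈ s, ‖fderiv ℝ Φ₀ x - A‖ ≤ 1/(4*N) := fun x hx => (hrsub hx).2
  have hsconv : Convex ℝ s := convex_closedBall _ _
  have hp₀s : p₀ ∈ s := Metric.mem_closedBall_self hr0.le
  -- mean value: approximation by `A` from a derivative bound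
  have approx : ∀ g : EuclideanSpace ℝ (Fin n) → EuclideanSpace ℝ (Fin n), ContDiffOn ℝ 1 g (closure U) → ∀ c : ℝ,
      (∀ x ∈ s, ‖fderiv ℝ g x - (A : EuclideanSpace ℝ (Fin n) →L[ℝ] EuclideanSpace ℝ (Fin n))‖ ≤ c) →
      ∀ x ∈ s, ∀ y ∈ s, ‖g x - g y - A (x - y)‖ ≤ c * ‖x - y‖ := by
    intro g hg c hc x hx y hy
    have key := hsconv.norm_image_sub_le_of_norm_hasFDerivWithin_le
      (f := fun z => g z - A z) (f' := fun z => fderiv ℝ g z - (A : EuclideanSpace ℝ (Fin n) →L[ℝ] EuclideanSpace ℝ (Fin n))) (C := c)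
      (fun z hz => ((hdiff g hg z (hsU hz)).sub
        ((A : EuclideanSpace ℝ (Fin n) →L[ℝ] EuclideanSpace ℝ (Fin n)).hasFDerivAt)).hasFDerivWithinAt) hc hy hx
    have heq : g x - A x - (g y - A y) = g x - g y - A (x - y) := by
      rw [map_sub]; abel
    rw [heq] at key
    exact key
  -- lower bound (injectivity estimate)
  have lower : ∀ g : EuclideanSpace ℝ (Fin n) → EuclideanSpace ℝ (Fin n), ∀ c : ℝ,
      (∀ x ∈ s, ∀ y ∈ s, ‖g x - g y - A (x - y)‖ ≤ c * ‖x - y‖) → c ≤ 1/(2*N) →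
      ∀ x ∈ s, ∀ y ∈ s, ‖x - y‖ ≤ 2 * N * ‖g x - g y‖ := by
    intro g c happ hc x hx y hy
    have h1 : ‖x - y‖ ≤ N * ‖A (x - y)‖ := hAinv _
    have h2 : ‖A (x - y)‖ ≤ ‖g x - g y‖ + c * ‖x - y‖ := by
      have : A (x - y) = (g x - g y) - (g x - g y - A (x - y)) := by abel
      calc ‖A (x - y)‖ = ‖(g x - g y) - (g x - g y - A (x - y))‖ := by rw [← this]
        _ ≤ ‖g x - g y‖ + ‖g x - g y - A (x - y)‖ := norm_sub_le _ _
        _ ≤ ‖g x - g y‖ + c * ‖x - y‖ := by linarith [happ x hx y hy]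
    have h3 : N * c ≤ 1/2 := by
      calc N * c ≤ N * (1/(2*N)) := by nlinarith
        _ = 1/2 := by field_simp
    have h4 : (0:ℝ) ≤ ‖x - y‖ := norm_nonneg _
    have h5 : N * ‖A (x - y)‖ ≤ N * ‖g x - g y‖ + (N * c) * ‖x - y‖ := by
      nlinarith [mul_le_mul_of_nonneg_left h2 hN0.le]
    have h6 : (N * c) * ‖x - y‖ ≤ (1/2) * ‖x - y‖ := mul_le_mul_of_nonneg_right h3 h4
    linarith
  -- choices
  set δ : ℝ := min (1/(4*N)) (r/(8*N)) with hδdef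
  have hδ0 : 0 < δ := lt_min (by positivity) (by positivity)
  set W : Set (EuclideanSpace ℝ (Fin n)) := Metric.ball (Φ₀ p₀) (r/(8*N)) with hWdef
  have hclW : closure W ⊆ Metric.closedBall (Φ₀ p₀) (r/(8*N)) :=
    Metric.closure_ball_subset_closedBall
  have hkey : ∀ Φ : EuclideanSpace ℝ (Fin n) → EuclideanSpace ℝ (Fin n), ContDiffOn ℝ 1 Φ (closure U) →
      ∀ ε : ℝ, 0 ≤ ε → ε ≤ δ →
      (∀ x ∈ closure U, ‖Φ x - Φ₀ x‖ + ‖fderiv ℝ Φ x - fderiv ℝ Φ₀ x‖ ≤ ε) →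
      (∃ Ψ : EuclideanSpace ℝ (Fin n) → EuclideanSpace ℝ (Fin n), ContinuousOn Ψ (closure W) ∧
        (∀ q ∈ closure W, Ψ q ∈ s ∧ Φ (Ψ q) = q)) ∧
      (∀ Ψ Ψ₀ : EuclideanSpace ℝ (Fin n) → EuclideanSpace ℝ (Fin n),
        (∀ q ∈ closure W, Ψ q ∈ s ∧ Φ (Ψ q) = q) →
        (∀ q ∈ closure W, Ψ₀ q ∈ s ∧ Φ₀ (Ψ₀ q) = q) →
        ∀ q ∈ closure W, ‖Ψ q - Ψ₀ q‖ ≤ (2 * N) * ε) := by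
    intro Φ hΦ ε hε0 hεδ hclose
    have hεa : ε ≤ 1/(4*N) := hεδ.trans (min_le_left _ _)
    have hεb : ε ≤ r/(8*N) := hεδ.trans (min_le_right _ _)
    have hder : ∀ x ∈ s, ‖fderiv ℝ Φ x - (A : EuclideanSpace ℝ (Fin n) →L[ℝ] EuclideanSpace ℝ (Fin n))‖ ≤ 1/(2*N) := by
      intro x hx
      have hx' : x ∈ closure U := subset_closure (hsU hx)
      have h1 := hclose x hx'
      have h2 : ‖fderiv ℝ Φ x - fderiv ℝ Φ₀ x‖ ≤ ε := by
        have := norm_nonneg (Φ x - Φ₀ x); linarith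
      calc ‖fderiv ℝ Φ x - (A : EuclideanSpace ℝ (Fin n) →L[ℝ] EuclideanSpace ℝ (Fin n))‖
          ≤ ‖fderiv ℝ Φ x - fderiv ℝ Φ₀ x‖ + ‖fderiv ℝ Φ₀ x - A‖ := by
            have : fderiv ℝ Φ x - (A : EuclideanSpace ℝ (Fin n) →L[ℝ] EuclideanSpace ℝ (Fin n)) =
                (fderiv ℝ Φ x - fderiv ℝ Φ₀ x) + (fderiv ℝ Φ₀ x - A) := by abel
            rw [this]; exact norm_add_le _ _
        _ ≤ ε + 1/(4*N) := add_le_add h2 (hsder x hx)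
        _ ≤ 1/(4*N) + 1/(4*N) := by linarith
        _ = 1/(2*N) := by field_simp; ring
    have happ : ∀ x ∈ s, ∀ y ∈ s, ‖Φ x - Φ y - A (x - y)‖ ≤ (1/(2*N)) * ‖x - y‖ :=
      approx Φ hΦ _ hder
    have hlow : ∀ x ∈ s, ∀ y ∈ s, ‖x - y‖ ≤ 2 * N * ‖Φ x - Φ y‖ :=
      lower Φ _ happ le_rfl
    -- `ApproximatesLinearOn` for the surjectivity statement
    have hc2 : (0:ℝ) ≤ 1/(2*N) := by positivity
    have happrox : ApproximatesLinearOn Φ (A : EuclideanSpace ℝ (Fin n) →L[ℝ] EuclideanSpace ℝ (Fin n)) s ⟨1/(2*N), hc2⟩ := by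
      intro x hx y hy
      exact happ x hx y hy
    have hsurj := happrox.surjOn_closedBall_of_nonlinearRightInverse
      A.toNonlinearRightInverse hr0.le (Subset.refl s)
    -- `closure W` is contained in the surjectivity range
    have hp₀cl : p₀ ∈ closure U := subset_closure hp₀
    have hΦp₀ : ‖Φ p₀ - Φ₀ p₀‖ ≤ ε := by
      have := hclose p₀ hp₀cl
      have := norm_nonneg (fderiv ℝ Φ p₀ - fderiv ℝ Φ₀ p₀); linarith
    have hradius : r/(4*N) ≤ ((A.toNonlinearRightInverse.nnnorm : ℝ)⁻¹ - 1/(2*N)) * r := by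
      have hnn : (A.toNonlinearRightInverse.nnnorm : ℝ) = ‖(A.symm : EuclideanSpace ℝ (Fin n) →L[ℝ] EuclideanSpace ℝ (Fin n))‖ := rfl
      rw [hnn]
      have hinv : 1/N < ‖(A.symm : EuclideanSpace ℝ (Fin n) →L[ℝ] EuclideanSpace ℝ (Fin n))‖⁻¹ := by
        rw [← one_div]
        exact one_div_lt_one_div_of_lt hAsymm_pos hAN
      have : 1/(4*N) ≤ ‖(A.symm : EuclideanSpace ℝ (Fin n) →L[ℝ] EuclideanSpace ℝ (Fin n))‖⁻¹ - 1/(2*N) := by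
        have h12 : 1/N - 1/(2*N) = 1/(2*N) := by field_simp; ring
        have : 1/(4*N) ≤ 1/(2*N) := by
          rw [div_le_div_iff₀ (by positivity) (by positivity)]; nlinarith
        linarith
      calc r/(4*N) = (1/(4*N)) * r := by ring
        _ ≤ (‖(A.symm : EuclideanSpace ℝ (Fin n) →L[ℝ] EuclideanSpace ℝ (Fin n))‖⁻¹ - 1/(2*N)) * r := by nlinarith
    have hWrange : ∀ q ∈ closure W, q ∈ Φ '' s := by
      intro q hq
      apply hsurj
      have h1 : dist q (Φ₀ p₀) ≤ r/(8*N) := hclW hq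
      have h2 : dist q (Φ p₀) ≤ r/(4*N) := by
        calc dist q (Φ p₀) ≤ dist q (Φ₀ p₀) + dist (Φ₀ p₀) (Φ p₀) := dist_triangle _ _ _
          _ ≤ r/(8*N) + ε := by
              rw [dist_eq_norm, norm_sub_rev] at *
              exact add_le_add h1 hΦp₀
          _ ≤ r/(8*N) + r/(8*N) := by linarith
          _ = r/(4*N) := by ring
      exact Metric.mem_closedBall.mpr (h2.trans hradius)
    -- construct the local inverse
    have hex : ∀ q : EuclideanSpace ℝ (Fin n), q ∈ closure W → ∃ p, p ∈ s ∧ Φ p = q := by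
      intro q hq
      obtain ⟨p, hp, hpq⟩ := hWrange q hq
      exact ⟨p, hp, hpq⟩
    refine ⟨?_, ?_⟩
    · set Ψ : EuclideanSpace ℝ (Fin n) → EuclideanSpace ℝ (Fin n) := fun q => if h : ∃ p, p ∈ s ∧ Φ p = q then h.choose else p₀ with hΨdef
      have hΨ : ∀ q ∈ closure W, Ψ q ∈ s ∧ Φ (Ψ q) = q := by
        intro q hq
        have h : ∃ p, p ∈ s ∧ Φ p = q := hex q hq
        simp only [hΨdef, dif_pos h]
        exact ⟨h.choose_spec.1, h.choose_spec.2⟩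
      have hlip : ∀ q ∈ closure W, ∀ q' ∈ closure W, ‖Ψ q - Ψ q'‖ ≤ 2 * N * ‖q - q'‖ := by
        intro q hq q' hq'
        have h1 := hΨ q hq
        have h2 := hΨ q' hq'
        have := hlow (Ψ q) h1.1 (Ψ q') h2.1
        rwa [h1.2, h2.2] at this
      have hcontΨ : ContinuousOn Ψ (closure W) := by
        have h2N : (0:ℝ) ≤ 2*N := by positivity
        have : LipschitzOnWith (Real.toNNReal (2*N)) Ψ (closure W) := by
          rw [lipschitzOnWith_iff_dist_le_mul]
          intro x hx y hy
          rw [dist_eq_norm, dist_eq_norm]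
          simpa [Real.coe_toNNReal _ h2N] using hlip x hx y hy
        exact this.continuousOn
      exact ⟨Ψ, hcontΨ, hΨ⟩
    · intro Ψ Ψ₀ hΨ hΨ₀ q hq
      have h1 := hΨ q hq
      have h2 := hΨ₀ q hq
      have happ₀ : ∀ x ∈ s, ∀ y ∈ s, ‖Φ₀ x - Φ₀ y - A (x - y)‖ ≤ (1/(4*N)) * ‖x - y‖ :=
        approx Φ₀ hΦ₀ _ hsder
      have hlow₀ : ∀ x ∈ s, ∀ y ∈ s, ‖x - y‖ ≤ 2 * N * ‖Φ₀ x - Φ₀ y‖ := by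
        refine lower Φ₀ _ happ₀ ?_
        rw [div_le_div_iff₀ (by positivity) (by positivity)]; nlinarith
      have key := hlow₀ (Ψ q) h1.1 (Ψ₀ q) h2.1
      rw [h2.2] at key
      have hΨqcl : Ψ q ∈ closure U := subset_closure (hsU h1.1)
      have hbound : ‖Φ₀ (Ψ q) - q‖ ≤ ε := by
        have heq : Φ₀ (Ψ q) - q = Φ₀ (Ψ q) - Φ (Ψ q) := by rw [h1.2]
        rw [heq, norm_sub_rev]
        have := hclose (Ψ q) hΨqcl
        have := norm_nonneg (fderiv ℝ Φ (Ψ q) - fderiv ℝ Φ₀ (Ψ q)); linarith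
      calc ‖Ψ q - Ψ₀ q‖ ≤ 2 * N * ‖Φ₀ (Ψ q) - q‖ := key
        _ ≤ (2 * N) * ε := by nlinarith
  -- assemble
  refine ⟨W, Metric.ball_mem_nhds _ (by positivity), s,
    Metric.closedBall_mem_nhds _ hr0, hsU, 2*N, by positivity, δ, hδ0, ?_, ?_⟩
  · have h0 := hkey Φ₀ hΦ₀ 0 le_rfl hδ0.le (by intro x _; simp)
    obtain ⟨⟨Ψ₀, hc, hΨ₀⟩, _⟩ := h0
    exact ⟨Ψ₀, hc, hΨ₀⟩
  · intro Φ hΦ ε hε0 hεδ hclose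
    exact hkey Φ hΦ ε hε0 hεδ hclose
end

section
/- Let H₁, H₂ be Hilbert spaces and let A, Ã : H₁ → H₂ be bounded linear operators with closed range whose Moore–Penrose pseudoinverses A†, Ã† are bounded. Then ‖Ã† - A†‖ ≤ 3 max(‖Ã†‖, ‖A†‖)² ‖Ã - A‖. -/
open ContinuousLinearMap

private lemma proj_norm_le_one {H : Type*} [NormedAddCommGroup H] [InnerProductSpace ℝ H]
    [CompleteSpace H] (P : H →L[ℝ] H)
    (hP : ContinuousLinearMap.adjoint P = P) (hP2 : P.comp P = P) : ‖P‖ ≤ 1 := by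
  refine P.opNorm_le_bound zero_le_one fun x => ?_
  rw [one_mul]
  have key : (inner ℝ (P x) (P x) : ℝ) = inner ℝ (P x) x := by
    have h := ContinuousLinearMap.adjoint_inner_left P (x := x) (y := P x)
    rw [hP] at h
    have hPP : P (P x) = P x := by
      have := congrArg (fun f : H →L[ℝ] H => f x) hP2
      simpa using this
    rw [hPP] at h
    exact h.symm
  have h1 : ‖P x‖ ^ 2 = inner ℝ (P x) (P x) := (real_inner_self_eq_norm_sq _).symm
  have h2 : (inner ℝ (P x) x : ℝ) ≤ ‖P x‖ * ‖x‖ := real_inner_le_norm _ _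
  have h3 : ‖P x‖ ^ 2 ≤ ‖P x‖ * ‖x‖ := by rw [h1, key]; exact h2
  rcases eq_or_lt_of_le (norm_nonneg (P x)) with h | h
  · rw [← h]; exact norm_nonneg x
  · nlinarith

set_option maxHeartbeats 1000000 in
/-- Izumino-type perturbation bound for Moore–Penrose pseudoinverses of bounded
operators with closed range between Hilbert spaces:
`‖B† - A†‖ ≤ 3 max(‖B†‖, ‖A†‖)² ‖B - A‖`. -/
theorem pseudoinverse_perturbation
    {H₁ H₂ : Type*}
    [NormedAddCommGroup H₁] [InnerProductSpace ℝ H₁] [CompleteSpace H₁]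
    [NormedAddCommGroup H₂] [InnerProductSpace ℝ H₂] [CompleteSpace H₂]
    (A B : H₁ →L[ℝ] H₂) (Ad Bd : H₂ →L[ℝ] H₁)
    (hAclosed : IsClosed (Set.range A)) (hBclosed : IsClosed (Set.range B))
    -- Moore–Penrose equations for `Ad = A†`
    (h1 : A.comp (Ad.comp A) = A) (h2 : Ad.comp (A.comp Ad) = Ad)
    (h3 : ContinuousLinearMap.adjoint (A.comp Ad) = A.comp Ad)
    (h4 : ContinuousLinearMap.adjoint (Ad.comp A) = Ad.comp A)
    -- Moore–Penrose equations for `Bd = B†`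
    (h1' : B.comp (Bd.comp B) = B) (h2' : Bd.comp (B.comp Bd) = Bd)
    (h3' : ContinuousLinearMap.adjoint (B.comp Bd) = B.comp Bd)
    (h4' : ContinuousLinearMap.adjoint (Bd.comp B) = Bd.comp B) :
    ‖Bd - Ad‖ ≤ 3 * max ‖Bd‖ ‖Ad‖ ^ 2 * ‖B - A‖ := by
  set E := B - A with hE
  set As := ContinuousLinearMap.adjoint A with hAs
  set Bs := ContinuousLinearMap.adjoint B with hBs
  set Ads := ContinuousLinearMap.adjoint Ad with hAds
  set Bds := ContinuousLinearMap.adjoint Bd with hBds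
  -- derived facts (in left-associated form)
  have factA2 : (As.comp A).comp Ad = As := by
    rw [comp_assoc]
    conv_lhs => rw [← h3, ← adjoint_comp, comp_assoc, h1]
  have factA4 : (As.comp Ads).comp Ad = Ad := by
    rw [hAs, hAds, ← adjoint_comp, h4, comp_assoc, h2]
  have factB1 : (Bd.comp Bds).comp Bs = Bd := by
    rw [comp_assoc, hBds, hBs, ← adjoint_comp, h3', h2']
  have factB3 : (Bd.comp B).comp Bs = Bs := by
    rw [← h4', hBs, ← adjoint_comp, h1']
  -- the three terms
  set T1 : H₂ →L[ℝ] H₁ := Bd.comp (E.comp Ad) with hT1def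
  set T2 : H₂ →L[ℝ] H₁ :=
    (Bd.comp Bds).comp ((ContinuousLinearMap.adjoint E).comp (1 - A.comp Ad)) with hT2def
  set T3 : H₂ →L[ℝ] H₁ :=
    (1 - Bd.comp B).comp ((ContinuousLinearMap.adjoint E).comp (Ads.comp Ad)) with hT3def
  have hEadj : ContinuousLinearMap.adjoint E = Bs - As := by
    rw [hE, map_sub, hBs, hAs]
  have hT1 : T1 = Bd.comp (B.comp Ad) - Bd.comp (A.comp Ad) := by
    rw [hT1def, hE, sub_comp, comp_sub]
  have hT2 : T2 = Bd - Bd.comp (A.comp Ad) := by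
    rw [hT2def, hEadj]
    simp only [sub_comp, comp_sub, ← comp_assoc, one_def, comp_id, factA2, factB1]
    abel
  have hT3 : T3 = Bd.comp (B.comp Ad) - Ad := by
    rw [hT3def, hEadj]
    simp only [sub_comp, comp_sub, ← comp_assoc, one_def, id_comp, factA4, factB3]
    abel
  have hsum : Bd - Ad = -T1 + T2 + T3 := by
    rw [hT1, hT2, hT3]; abel
  -- norm bounds
  set M := max ‖Bd‖ ‖Ad‖ with hM
  have hBdM : ‖Bd‖ ≤ M := le_max_left _ _
  have hAdM : ‖Ad‖ ≤ M := le_max_right _ _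
  have hM0 : (0:ℝ) ≤ M := le_trans (norm_nonneg _) hBdM
  have hEadjnorm : ‖ContinuousLinearMap.adjoint E‖ = ‖E‖ :=
    LinearIsometryEquiv.norm_map ContinuousLinearMap.adjoint E
  have hAdsnorm : ‖Ads‖ = ‖Ad‖ := LinearIsometryEquiv.norm_map ContinuousLinearMap.adjoint Ad
  have hBdsnorm : ‖Bds‖ = ‖Bd‖ := LinearIsometryEquiv.norm_map ContinuousLinearMap.adjoint Bd
  -- projections
  have hPAidem : (A.comp Ad).comp (A.comp Ad) = A.comp Ad := by
    rw [← comp_assoc, comp_assoc A Ad A, h1]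
  have hPBidem : (Bd.comp B).comp (Bd.comp B) = Bd.comp B := by
    rw [← comp_assoc, comp_assoc Bd B Bd, h2']
  have hQA : ‖(1 : H₂ →L[ℝ] H₂) - A.comp Ad‖ ≤ 1 := by
    refine proj_norm_le_one _ ?_ ?_
    · rw [map_sub, h3, one_def, adjoint_id]
    · simp only [sub_comp, comp_sub, one_def, comp_id, id_comp, hPAidem]
      abel
  have hQB : ‖(1 : H₁ →L[ℝ] H₁) - Bd.comp B‖ ≤ 1 := by
    refine proj_norm_le_one _ ?_ ?_
    · rw [map_sub, h4', one_def, adjoint_id]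
    · simp only [sub_comp, comp_sub, one_def, comp_id, id_comp, hPBidem]
      abel
  have bT1 : ‖T1‖ ≤ M * (‖E‖ * M) := by
    calc ‖T1‖ ≤ ‖Bd‖ * ‖E.comp Ad‖ := opNorm_comp_le _ _
      _ ≤ ‖Bd‖ * (‖E‖ * ‖Ad‖) := by
          gcongr
          exact opNorm_comp_le _ _
      _ ≤ M * (‖E‖ * M) := by gcongr
  have bT2 : ‖T2‖ ≤ M * M * (‖E‖ * 1) := by
    calc ‖T2‖ ≤ ‖Bd.comp Bds‖ * ‖(ContinuousLinearMap.adjoint E).comp (1 - A.comp Ad)‖ :=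
          opNorm_comp_le _ _
      _ ≤ (‖Bd‖ * ‖Bds‖) * (‖ContinuousLinearMap.adjoint E‖ * ‖(1 : H₂ →L[ℝ] H₂) - A.comp Ad‖) := by
          exact mul_le_mul (opNorm_comp_le _ _) (opNorm_comp_le _ _) (norm_nonneg _)
            (mul_nonneg (norm_nonneg _) (norm_nonneg _))
      _ = (‖Bd‖ * ‖Bd‖) * (‖E‖ * ‖(1 : H₂ →L[ℝ] H₂) - A.comp Ad‖) := by
          rw [hBdsnorm, hEadjnorm]
      _ ≤ M * M * (‖E‖ * 1) := by gcongr
  have bT3 : ‖T3‖ ≤ 1 * (‖E‖ * (M * M)) := by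
    calc ‖T3‖ ≤ ‖(1 : H₁ →L[ℝ] H₁) - Bd.comp B‖ * ‖(ContinuousLinearMap.adjoint E).comp (Ads.comp Ad)‖ :=
          opNorm_comp_le _ _
      _ ≤ ‖(1 : H₁ →L[ℝ] H₁) - Bd.comp B‖ * (‖ContinuousLinearMap.adjoint E‖ * (‖Ads‖ * ‖Ad‖)) := by
          gcongr
          calc ‖(ContinuousLinearMap.adjoint E).comp (Ads.comp Ad)‖
              ≤ ‖ContinuousLinearMap.adjoint E‖ * ‖Ads.comp Ad‖ := opNorm_comp_le _ _
            _ ≤ ‖ContinuousLinearMap.adjoint E‖ * (‖Ads‖ * ‖Ad‖) := by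
                gcongr; exact opNorm_comp_le _ _
      _ = ‖(1 : H₁ →L[ℝ] H₁) - Bd.comp B‖ * (‖E‖ * (‖Ad‖ * ‖Ad‖)) := by
          rw [hAdsnorm, hEadjnorm]
      _ ≤ 1 * (‖E‖ * (M * M)) := by gcongr
  have htri : ‖Bd - Ad‖ ≤ ‖T1‖ + ‖T2‖ + ‖T3‖ := by
    rw [hsum]
    calc ‖-T1 + T2 + T3‖ ≤ ‖-T1 + T2‖ + ‖T3‖ := norm_add_le _ _
      _ ≤ ‖-T1‖ + ‖T2‖ + ‖T3‖ := by gcongr; exact norm_add_le _ _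
      _ = ‖T1‖ + ‖T2‖ + ‖T3‖ := by rw [norm_neg]
  have hEnn : (0:ℝ) ≤ ‖E‖ := norm_nonneg _
  calc ‖Bd - Ad‖ ≤ ‖T1‖ + ‖T2‖ + ‖T3‖ := htri
    _ ≤ (M * (‖E‖ * M)) + (M * M * (‖E‖ * 1)) + (1 * (‖E‖ * (M * M))) := by gcongr
    _ = 3 * M ^ 2 * ‖E‖ := by ring
    _ = 3 * max ‖Bd‖ ‖Ad‖ ^ 2 * ‖B - A‖ := by rw [hM, hE]
end

section
/- Let H₁, H₂ be Hilbert spaces, L : H₁ → H₂ bounded with dense range, and b ∈ H₁. For α > 0 let f_α = (L*L + α)⁻¹ b. Suppose there exists ψ ∈ H₂ with b = L*ψ. Then L f_α → ψ_proj as α → 0, where ψ_proj is the orthogonal projection of ψ onto the closure of the range of L; in particular if L has dense range then L f_α → ψ. -/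
open Filter Topology

set_option maxHeartbeats 1600000 in
/-- Regularized normal equations converge to the projected target: if
`f_α = (L*L + α)⁻¹ b` with `b = L* ψ`, then `L f_α` converges as `α → 0⁺` to the
orthogonal projection of `ψ` onto the closure of the range of `L`; in particular, if
`L` has dense range then `L f_α → ψ`. -/
theorem regularized_normal_equation_convergence
    {H₁ H₂ : Type*}
    [NormedAddCommGroup H₁] [InnerProductSpace ℝ H₁] [CompleteSpace H₁]
    [NormedAddCommGroup H₂] [InnerProductSpace ℝ H₂] [CompleteSpace H₂]
    (L : H₁ →L[ℝ] H₂) (b : H₁) (ψ : H₂)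
    (hb : b = (ContinuousLinearMap.adjoint L) ψ)
    (f : ℝ → H₁)
    (hf : ∀ α : ℝ, 0 < α →
      (ContinuousLinearMap.adjoint L) (L (f α)) + α • f α = b) :
    Tendsto (fun α => L (f α)) (𝓝[>] (0:ℝ))
      (𝓝 ((Submodule.orthogonalProjection (LinearMap.range (L : H₁ →ₗ[ℝ] H₂)).topologicalClosure ψ : _) : H₂)) ∧
    (DenseRange L → Tendsto (fun α => L (f α)) (𝓝[>] (0:ℝ)) (𝓝 ψ)) := by
  obtain ⟨ψ₁, hψ₁def⟩ : ∃ z : H₂,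
      z = ((Submodule.orthogonalProjection (LinearMap.range (L : H₁ →ₗ[ℝ] H₂)).topologicalClosure ψ : _) : H₂) :=
    ⟨_, rfl⟩
  rw [← hψ₁def]
  have hψ₁S : ψ₁ ∈ (LinearMap.range (L : H₁ →ₗ[ℝ] H₂)).topologicalClosure := by
    rw [hψ₁def]; exact (Submodule.orthogonalProjection _ ψ).2
  have hperp : ψ - ψ₁ ∈ ((LinearMap.range (L : H₁ →ₗ[ℝ] H₂)).topologicalClosure)ᗮ := by
    rw [hψ₁def]; exact Submodule.sub_starProjection_mem_orthogonal ψ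
  have hrange : ∀ x : H₁, L x ∈ (LinearMap.range (L : H₁ →ₗ[ℝ] H₂)).topologicalClosure :=
    fun x => Submodule.le_topologicalClosure _ ⟨x, rfl⟩
  have hadj0 : (ContinuousLinearMap.adjoint L) (ψ - ψ₁) = 0 := by
    refine ext_inner_right ℝ fun x => ?_
    rw [ContinuousLinearMap.adjoint_inner_left, inner_zero_left, real_inner_comm]
    exact hperp (L x) (hrange x)
  have hadjψ₁ : (ContinuousLinearMap.adjoint L) ψ₁ = b := by
    have h := map_sub (ContinuousLinearMap.adjoint L) ψ ψ₁
    rw [hadj0] at h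
    rw [hb, sub_eq_zero.mp h.symm]
  have main : Tendsto (fun α => L (f α)) (𝓝[>] (0:ℝ)) (𝓝 ψ₁) := by
    rw [Metric.tendsto_nhds]
    intro ε' hε'
    obtain ⟨c, hcdef⟩ : ∃ c : ℝ, c = ε' ^ 2 / 2 := ⟨_, rfl⟩
    have hc : (0:ℝ) < c := by rw [hcdef]; positivity
    have hεpos : (0:ℝ) < c / (‖ψ₁‖ + 1) := by positivity
    have hψ₁cl : ψ₁ ∈ closure ((LinearMap.range (L : H₁ →ₗ[ℝ] H₂)) : Set H₂) := hψ₁S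
    obtain ⟨y, hy, hydist⟩ := Metric.mem_closure_iff.mp hψ₁cl _ hεpos
    obtain ⟨w, hw⟩ := hy
    have hw' : L w = y := hw
    have hwdist : ‖ψ₁ - L w‖ < c / (‖ψ₁‖ + 1) := by
      rw [hw']; rwa [dist_eq_norm] at hydist
    obtain ⟨δ, hδdef⟩ : ∃ d : ℝ, d = c ^ 2 / ((‖w‖ * ‖ψ₁‖) ^ 2 + 1) := ⟨_, rfl⟩
    have hδpos : 0 < δ := by rw [hδdef]; positivity
    filter_upwards [Ioo_mem_nhdsGT_of_mem (Set.mem_Ico.mpr ⟨le_refl 0, hδpos⟩)]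
      with α hα
    obtain ⟨hα0, hαδ⟩ := hα
    obtain ⟨e, hedef⟩ : ∃ e : H₂, e = L (f α) - ψ₁ := ⟨_, rfl⟩
    -- key: L* e = -(α • f α)
    have h1 : (ContinuousLinearMap.adjoint L) e = -(α • f α) := by
      have hfe := hf α hα0
      rw [hedef, map_sub, hadjψ₁]
      have h' : (ContinuousLinearMap.adjoint L) (L (f α)) = b - α • f α := by
        rw [← hfe]; abel
      rw [h']; abel
    -- energy identity
    have h2 : ‖(ContinuousLinearMap.adjoint L) e‖ ^ 2 + α * ‖e‖ ^ 2
        = -(α * inner ℝ ψ₁ e) := by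
      have hLLe : L ((ContinuousLinearMap.adjoint L) e) = -(α • e) - α • ψ₁ := by
        rw [h1, map_neg, map_smul]
        have hLf : L (f α) = e + ψ₁ := by rw [hedef]; abel
        rw [hLf, smul_add]; abel
      have hsym : ‖(ContinuousLinearMap.adjoint L) e‖ ^ 2
          = (inner ℝ e (L ((ContinuousLinearMap.adjoint L) e)) : ℝ) := by
        rw [← ContinuousLinearMap.adjoint_inner_left, real_inner_comm,
          real_inner_self_eq_norm_sq]
      rw [hsym, hLLe]
      simp only [inner_sub_right, inner_neg_right, real_inner_smul_right]
      rw [real_inner_comm e ψ₁, real_inner_self_eq_norm_sq]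
      ring
    have hinner_le : -(inner ℝ ψ₁ e : ℝ) ≤ ‖ψ₁‖ * ‖e‖ := by
      have h := real_inner_le_norm (-ψ₁) e
      simpa [inner_neg_left] using h
    have hLe : ‖(ContinuousLinearMap.adjoint L) e‖ = α * ‖f α‖ := by
      rw [h1, norm_neg, norm_smul, Real.norm_eq_abs, abs_of_pos hα0]
    -- abbreviate reals
    obtain ⟨A, hA⟩ : ∃ A : ℝ, A = ‖(ContinuousLinearMap.adjoint L) e‖ := ⟨_, rfl⟩
    obtain ⟨N, hN⟩ : ∃ N : ℝ, N = ‖e‖ := ⟨_, rfl⟩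
    obtain ⟨P, hP⟩ : ∃ P : ℝ, P = ‖ψ₁‖ := ⟨_, rfl⟩
    obtain ⟨F, hF⟩ : ∃ F : ℝ, F = ‖f α‖ := ⟨_, rfl⟩
    obtain ⟨W, hW⟩ : ∃ W : ℝ, W = ‖w‖ := ⟨_, rfl⟩
    obtain ⟨I, hI⟩ : ∃ I : ℝ, I = (inner ℝ ψ₁ e : ℝ) := ⟨_, rfl⟩
    rw [← hA, ← hN, ← hI] at h2
    rw [← hI, ← hP, ← hN] at hinner_le
    rw [← hA, ← hF] at hLe
    obtain ⟨Q, hQ⟩ : ∃ Q : ℝ, Q = ‖ψ₁ - L w‖ := ⟨_, rfl⟩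
    have hQdist : Q < c / (P + 1) := by rw [hQ, hP]; exact hwdist
    have hQ0 : 0 ≤ Q := hQ ▸ norm_nonneg _
    have hN0 : 0 ≤ N := hN ▸ norm_nonneg e
    have hP0 : 0 ≤ P := hP ▸ norm_nonneg ψ₁
    have hF0 : 0 ≤ F := hF ▸ norm_nonneg (f α)
    have hW0 : 0 ≤ W := hW ▸ norm_nonneg w
    have hA0 : 0 ≤ A := hA ▸ norm_nonneg _
    have hwe : -(inner ℝ (L w) e : ℝ) ≤ α * (W * F) := by
      have hLwe : (inner ℝ (L w) e : ℝ) = -(α * inner ℝ w (f α)) := by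
        rw [← ContinuousLinearMap.adjoint_inner_right, h1, inner_neg_right,
          real_inner_smul_right]
      rw [hLwe, neg_neg]
      have h := real_inner_le_norm w (f α)
      rw [← hW, ← hF] at h
      exact mul_le_mul_of_nonneg_left h hα0.le
    have hwe2 : -(inner ℝ (ψ₁ - L w) e : ℝ) ≤ Q * N := by
      have h := real_inner_le_norm (L w - ψ₁) e
      have heq : -(inner ℝ (ψ₁ - L w) e : ℝ) = inner ℝ (L w - ψ₁) e := by
        rw [← inner_neg_left, neg_sub]
      rw [heq, hQ, hN, norm_sub_rev]
      exact h
    have hsplit : -I = -(inner ℝ (L w) e : ℝ) + -(inner ℝ (ψ₁ - L w) e : ℝ) := by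
      rw [hI, inner_sub_left]; ring
    rw [← hW, ← hP] at hδdef
    clear hψ₁def hψ₁S hperp hψ₁cl hadj0 hadjψ₁ hf hb hw hw' hydist hwdist
    clear hA hP hF hW hI hQ h1 hεpos
    -- bound ‖e‖ ≤ ‖ψ₁‖
    have hbe : N ≤ P := by
      have h4 : N ^ 2 ≤ P * N := by
        have t := mul_le_mul_of_nonneg_left hinner_le hα0.le
        have h3 : α * N ^ 2 ≤ α * (P * N) := by nlinarith [sq_nonneg A]
        exact le_of_mul_le_mul_left h3 hα0
      nlinarith
    rw [hLe] at h2
    -- bound on f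
    have hbf : α * F ^ 2 ≤ P ^ 2 := by
      have h6 : -(α * I) ≤ α * P ^ 2 := by
        nlinarith [mul_le_mul_of_nonneg_left hinner_le hα0.le,
          mul_le_mul_of_nonneg_left (mul_le_mul_of_nonneg_left hbe hP0) hα0.le]
      have h5 : (α * F) ^ 2 ≤ α * P ^ 2 := by linarith [mul_nonneg hα0.le (sq_nonneg N), h2]
      have h7 : α * (α * F ^ 2) ≤ α * P ^ 2 := by linarith [h5]
      exact le_of_mul_le_mul_left h7 hα0
    -- main estimate
    have hmain : N ^ 2 ≤ α * W * F + (c / (P + 1)) * P := by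
      have hterm1 := hwe
      have hterm2 : -(inner ℝ (ψ₁ - L w) e : ℝ) ≤ (c / (P + 1)) * P := by
        have h7 : Q * N ≤ (c / (P + 1)) * P :=
          mul_le_mul hQdist.le hbe hN0 (by positivity)
        linarith [hwe2]
      have h8 : α * N ^ 2 ≤ α * (α * (W * F)) + α * ((c / (P + 1)) * P) := by
        have heq : α * N ^ 2 ≤ -(α * I) := by linarith [sq_nonneg (α * F), h2]
        have hI2 : -(α * I) = α * (-(inner ℝ (L w) e : ℝ)) + α * (-(inner ℝ (ψ₁ - L w) e : ℝ)) := by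
          have hr : -(α * I) = α * (-I) := by ring
          rw [hr, hsplit]; ring
        rw [hI2] at heq
        have t1 := mul_le_mul_of_nonneg_left hterm1 hα0.le
        have t2 := mul_le_mul_of_nonneg_left hterm2 hα0.le
        linarith
      have h9 : α * N ^ 2 ≤ α * (α * (W * F) + (c / (P + 1)) * P) := by linarith
      have := le_of_mul_le_mul_left h9 hα0
      linarith
    -- bound the α-dependent term
    have hterm : α * W * F < c := by
      have hx : 0 ≤ α * W * F := by positivity
      have hx2 : (α * W * F) ^ 2 < c ^ 2 := by
        have he1 : (α * W * F) ^ 2 = W ^ 2 * α * (α * F ^ 2) := by ring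
        rw [he1]
        have h9 : W ^ 2 * α * (α * F ^ 2) ≤ W ^ 2 * α * P ^ 2 := by
          have hnn : (0:ℝ) ≤ W ^ 2 * α := by positivity
          exact mul_le_mul_of_nonneg_left hbf hnn
        have h10 : W ^ 2 * α * P ^ 2 < c ^ 2 := by
          have hαlt : α < c ^ 2 / ((W * P) ^ 2 + 1) := hδdef ▸ hαδ
          have hpos : (0:ℝ) < (W * P) ^ 2 + 1 := by positivity
          rw [lt_div_iff₀ hpos] at hαlt
          nlinarith [sq_nonneg (W * P)]
        linarith
      exact lt_of_pow_lt_pow_left₀ 2 hc.le hx2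
    have hterm2' : (c / (P + 1)) * P < c := by
      have hp1 : (0:ℝ) < P + 1 := by linarith
      rw [div_mul_eq_mul_div, div_lt_iff₀ hp1]
      nlinarith
    have hfin : N ^ 2 < ε' ^ 2 := by
      have : N ^ 2 < c + c := by linarith
      rw [hcdef] at this; linarith
    rw [dist_eq_norm]
    have hNfin : N < ε' := lt_of_pow_lt_pow_left₀ 2 hε'.le hfin
    calc ‖L (f α) - ψ₁‖ = N := by rw [hN, hedef]
      _ < ε' := hNfin
  refine ⟨main, fun hd => ?_⟩
  have hψmem : ψ ∈ (LinearMap.range (L : H₁ →ₗ[ℝ] H₂)).topologicalClosure := by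
    have h1 : ψ ∈ closure (Set.range L) := hd ψ
    have h2 : (Set.range L) = ((LinearMap.range (L : H₁ →ₗ[ℝ] H₂)) : Set H₂) := by
      ext x; simp [LinearMap.mem_range]
    rw [h2] at h1
    exact h1
  have : ψ₁ = ψ := by
    rw [hψ₁def]
    exact Submodule.starProjection_eq_self_iff.mpr hψmem
  rwa [this] at main
end
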